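/- Let P be a polytope with vertices in Z^n such that the set X of non-vertex integer points of P has |X| = 4 and conv(X) is a tetrahedron with Z^n ∩ conv(X) = X. Then |vert(P)| ≤ 2^{n+1}. -/

import Mathlib

/-- The set of integer points of `ℝ^n`. -/
def intLat (n : ℕ) : Set (Fin n → ℝ) := {x | ∀ i, ∃ m : ℤ, x i = (m : ℝ)}

/-- Let `P` be a polytope with vertices in `ℤ^n` (`n ≥ 3`) such that the
set `X` of non-vertex integer points of `P` has `|X| = 4` and `conv(X)` is a
tetrahedron (a 3-dimensional polytope with the four points of `X` as its vertices)
with `ℤ^n ∩ conv(X) = X`. Then `|vert(P)| ≤ 2^(n+1)`. -/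
theorem stmt13 (n : ℕ) (hn : 3 ≤ n)
    (V : Finset (Fin n → ℝ)) (hVS : ↑V ⊆ intLat n)
    (hvert : Set.extremePoints ℝ (convexHull ℝ (V : Set (Fin n → ℝ))) = ↑V)
    (X : Set (Fin n → ℝ))
    (hX : X = (intLat n ∩ convexHull ℝ (V : Set (Fin n → ℝ))) \ ↑V)
    (hXfin : X.Finite) (hXcard : X.ncard = 4)
    (hXvert : Set.extremePoints ℝ (convexHull ℝ X) = X)
    (hXdim : Module.finrank ℝ (affineSpan ℝ X).direction = 3)
    (hXint : intLat n ∩ convexHull ℝ X = X) :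
    V.card ≤ 2 ^ (n + 1) := by
  classical
  set P := convexHull ℝ (V : Set (Fin n → ℝ)) with hPdef
  -- the parity class map
  set cl : (Fin n → ℝ) → (Fin n → ZMod 2) :=
    fun x i => ((round (x i) : ℤ) : ZMod 2) with hcldef
  -- cancellation of doubling
  have half : ∀ a b : Fin n → ℝ, a + a = b + b → a = b := by
    intro a b h
    funext i
    have := congrFun h i
    simp only [Pi.add_apply] at this
    linarith
  -- basic memberships
  have hXlat : X ⊆ intLat n := by intro x hx; rw [hX] at hx; exact hx.1.1
  have hXP : X ⊆ P := by intro x hx; rw [hX] at hx; exact hx.1.2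
  have hXV : ∀ x ∈ X, x ∉ (V : Set (Fin n → ℝ)) := by
    intro x hx; rw [hX] at hx; exact hx.2
  have hVP : (V : Set (Fin n → ℝ)) ⊆ P := subset_convexHull ℝ _
  -- parity: midpoints of same-class lattice points are lattice points
  have parity : ∀ p q : Fin n → ℝ, p ∈ intLat n → q ∈ intLat n → cl p = cl q →
      (2⁻¹ : ℝ) • (p + q) ∈ intLat n := by
    intro p q hp hq hpq i
    obtain ⟨a, ha⟩ := hp i
    obtain ⟨b, hb⟩ := hq i
    have hcc : ((a : ZMod 2)) = (b : ZMod 2) := by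
      have h1 := congrFun hpq i
      simp only [hcldef] at h1
      rwa [ha, hb, round_intCast, round_intCast] at h1
    have hdvd : (2 : ℤ) ∣ b - a := (ZMod.intCast_eq_intCast_iff a b 2).1 hcc |>.dvd
    obtain ⟨k, hk⟩ := hdvd
    refine ⟨a + k, ?_⟩
    have : b = a + 2 * k := by linarith [hk]
    simp only [Pi.smul_apply, Pi.add_apply, smul_eq_mul]
    rw [ha, hb, this]
    push_cast
    ring
  -- key: the midpoint of two distinct same-class lattice points of P is in X
  have key : ∀ p q : Fin n → ℝ, p ∈ intLat n → p ∈ P → q ∈ intLat n → q ∈ P →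
      p ≠ q → cl p = cl q → ∃ z ∈ X, z + z = p + q := by
    intro p q hpl hpP hql hqP hne hpq
    set z := (2⁻¹ : ℝ) • (p + q) with hzdef
    have hzz : z + z = p + q := by
      funext i
      simp only [hzdef, Pi.smul_apply, Pi.add_apply, smul_eq_mul]
      ring
    have hzeq : (2⁻¹ : ℝ) • p + (2⁻¹ : ℝ) • q = z := by
      rw [hzdef, smul_add]
    have hzseg : z ∈ openSegment ℝ p q :=
      ⟨2⁻¹, 2⁻¹, by norm_num, by norm_num, by norm_num, hzeq⟩
    have hzP : z ∈ P := by
      have := (convex_convexHull ℝ (V : Set (Fin n → ℝ))) hpP hqP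
        (by norm_num : (0:ℝ) ≤ 2⁻¹) (by norm_num : (0:ℝ) ≤ 2⁻¹) (by norm_num)
      rwa [hzeq] at this
    have hzV : z ∉ (V : Set (Fin n → ℝ)) := by
      intro hzV
      have hzext : z ∈ Set.extremePoints ℝ P := by rw [hvert]; exact hzV
      have h1 := hzext.2 hpP hqP hzseg
      have h2 := hzext.2 hqP hpP (openSegment_symm ℝ p q ▸ hzseg)
      exact hne (h1.trans h2.symm)
    refine ⟨z, ?_, hzz⟩
    rw [hX]
    exact ⟨⟨parity p q hpl hql hpq, hzP⟩, hzV⟩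
  -- no point of X is a midpoint of two distinct points of X
  have Xext : ∀ x ∈ X, ∀ y ∈ X, ∀ w ∈ X, y ≠ w → x + x = y + w → False := by
    intro x hx y hy w hw hyw hsum
    have hxext : x ∈ Set.extremePoints ℝ (convexHull ℝ X) := by rw [hXvert]; exact hx
    have hxeq : (2⁻¹ : ℝ) • y + (2⁻¹ : ℝ) • w = x := by
      apply half
      funext i
      have := congrFun hsum i
      simp only [Pi.add_apply, Pi.smul_apply, smul_eq_mul] at this ⊢
      linarith
    have hxo : x ∈ openSegment ℝ y w :=
      ⟨2⁻¹, 2⁻¹, by norm_num, by norm_num, by norm_num, hxeq⟩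
    have h1 := hxext.2 (subset_convexHull ℝ X hy) (subset_convexHull ℝ X hw) hxo
    have h2 := hxext.2 (subset_convexHull ℝ X hw) (subset_convexHull ℝ X hy)
      (openSegment_symm ℝ y w ▸ hxo)
    exact hyw (h1.trans h2.symm)
  -- cl is injective on X
  have clX : Set.InjOn cl X := by
    intro x hx y hy hxy
    by_contra hne
    set z := (2⁻¹ : ℝ) • (x + y) with hzdef
    have hzz : z + z = x + y := by
      funext i
      simp only [hzdef, Pi.smul_apply, Pi.add_apply, smul_eq_mul]
      ring
    have hzeq : (2⁻¹ : ℝ) • x + (2⁻¹ : ℝ) • y = z := by rw [hzdef, smul_add]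
    have hzX : z ∈ X := by
      rw [← hXint]
      refine ⟨parity x y (hXlat hx) (hXlat hy) hxy, ?_⟩
      have := (convex_convexHull ℝ X) (subset_convexHull ℝ X hx) (subset_convexHull ℝ X hy)
        (by norm_num : (0:ℝ) ≤ 2⁻¹) (by norm_num : (0:ℝ) ≤ 2⁻¹) (by norm_num)
      rwa [hzeq] at this
    exact Xext z hzX x hx y hy hne hzz
  -- affine independence of X
  haveI : Fintype ↥X := hXfin.fintype
  have hXtf : X.toFinset.card = 4 := by
    rw [← Set.ncard_eq_toFinset_card']; exact hXcard
  have hcard4 : Fintype.card ↥X = 4 := by rw [← Set.toFinset_card]; exact hXtf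
  have haff : AffineIndependent ℝ ((↑) : ↥X → (Fin n → ℝ)) := by
    rw [affineIndependent_iff_finrank_vectorSpan_eq ℝ _
      (by rw [hcard4] : Fintype.card ↥X = 3 + 1)]
    rw [Subtype.range_coe, ← direction_affineSpan]
    exact hXdim
  -- no relation a + b = c + d among four distinct points of X
  have dep4 : ∀ a ∈ X, ∀ b ∈ X, ∀ c ∈ X, ∀ d ∈ X, a ≠ b → a ≠ c → a ≠ d →
      b ≠ c → b ≠ d → c ≠ d → a + b = c + d → False := by
    intro a ha b hb c hc d hd hab hac had hbc hbd hcd habcd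
    have h2 := affineIndependent_iff.1 haff
    set A : ↥X := ⟨a, ha⟩ with hA
    set B : ↥X := ⟨b, hb⟩ with hB
    set C : ↥X := ⟨c, hc⟩ with hC
    set D : ↥X := ⟨d, hd⟩ with hD
    have hBA : B ≠ A := fun h => hab (congrArg Subtype.val h).symm
    have hCA : C ≠ A := fun h => hac (congrArg Subtype.val h).symm
    have hDA : D ≠ A := fun h => had (congrArg Subtype.val h).symm
    have hCB : C ≠ B := fun h => hbc (congrArg Subtype.val h).symm
    have hDB : D ≠ B := fun h => hbd (congrArg Subtype.val h).symm
    have hDC : D ≠ C := fun h => hcd (congrArg Subtype.val h).symm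
    set w : ↥X → ℝ := fun z => if z = A then 1 else if z = B then 1 else -1 with hw
    have hwA : w A = 1 := by simp [hw]
    have hwB : w B = 1 := by simp [hw, hBA]
    have hwC : w C = -1 := by simp [hw, hCA, hCB]
    have hwD : w D = -1 := by simp [hw, hDA, hDB]
    have hmCD : C ∉ ({D} : Finset ↥X) := by
      simp only [Finset.mem_singleton]; exact fun h => hDC h.symm
    have hmBCD : B ∉ ({C, D} : Finset ↥X) := by
      simp only [Finset.mem_insert, Finset.mem_singleton]
      rintro (h | h) <;> [exact hCB h.symm; exact hDB h.symm]
    have hmABCD : A ∉ ({B, C, D} : Finset ↥X) := by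
      simp only [Finset.mem_insert, Finset.mem_singleton]
      rintro (h | h | h) <;> [exact hBA h.symm; exact hCA h.symm; exact hDA h.symm]
    have hs1 : ∑ e ∈ ({A, B, C, D} : Finset ↥X), w e = 0 := by
      rw [Finset.sum_insert hmABCD, Finset.sum_insert hmBCD, Finset.sum_insert hmCD,
        Finset.sum_singleton, hwA, hwB, hwC, hwD]
      norm_num
    have hs2 : ∑ e ∈ ({A, B, C, D} : Finset ↥X), w e • (e : Fin n → ℝ) = 0 := by
      rw [Finset.sum_insert hmABCD, Finset.sum_insert hmBCD, Finset.sum_insert hmCD,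
        Finset.sum_singleton, hwA, hwB, hwC, hwD, one_smul, one_smul, neg_one_smul,
        neg_one_smul]
      linear_combination habcd
    have hfin := h2 ({A, B, C, D} : Finset ↥X) w hs1 hs2 A (Finset.mem_insert_self _ _)
    rw [hwA] at hfin
    exact one_ne_zero hfin
  -- classes of points of X contain at most one vertex
  have hVx : ∀ x ∈ X, ∀ p ∈ (V : Set (Fin n → ℝ)), ∀ q ∈ (V : Set (Fin n → ℝ)),
      cl p = cl x → cl q = cl x → p = q := by
    intro x hx p hp q hq hpx hqx
    by_contra hpq
    have hpX : p ≠ x := fun h => hXV x hx (h ▸ hp)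
    have hqX : q ≠ x := fun h => hXV x hx (h ▸ hq)
    obtain ⟨zp, hzpX, hzp⟩ := key p x (hVS hp) (hVP hp) (hXlat hx) (hXP hx) hpX hpx
    obtain ⟨zq, hzqX, hzq⟩ := key q x (hVS hq) (hVP hq) (hXlat hx) (hXP hx) hqX hqx
    obtain ⟨zpq, hzpqX, hzpq⟩ := key p q (hVS hp) (hVP hp) (hVS hq) (hVP hq) hpq
      (hpx.trans hqx.symm)
    have hzpx : zp ≠ x := by
      intro h; rw [h] at hzp; exact hpX (add_right_cancel hzp).symm
    have hzqx : zq ≠ x := by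
      intro h; rw [h] at hzq; exact hqX (add_right_cancel hzq).symm
    have hzpzq : zp ≠ zq := by
      intro h; rw [h] at hzp
      exact hpq (add_right_cancel (hzp.symm.trans hzq))
    have hE : zpq + x = zp + zq := by
      apply half; linear_combination hzpq - hzp - hzq
    by_cases h1 : zpq = x
    · rw [h1] at hE
      exact Xext x hx zp hzpX zq hzqX hzpzq hE
    · by_cases h2 : zpq = zp
      · rw [h2] at hE
        exact hzqx (add_left_cancel hE).symm
      · by_cases h3 : zpq = zq
        · rw [h3] at hE
          have hE' : x + zq = zp + zq := by linear_combination hE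
          exact hzpx (add_right_cancel hE').symm
        · exact dep4 zpq hzpqX x hx zp hzpX zq hzqX h1 h2 h3 hzpx.symm hzqx.symm hzpzq hE
  -- there are no five pairwise distinct points in X
  have h5 : ∀ a ∈ X, ∀ b ∈ X, ∀ c ∈ X, ∀ d ∈ X, ∀ e ∈ X,
      a ≠ b → a ≠ c → a ≠ d → a ≠ e → b ≠ c → b ≠ d → b ≠ e → c ≠ d → c ≠ e → d ≠ e →
      False := by
    intro a ha b hb c hc d hd e he hab hac had hae hbc hbd hbe hcd hce hde
    have hsub : ({a, b, c, d, e} : Finset (Fin n → ℝ)) ⊆ X.toFinset := by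
      intro x hx
      simp only [Finset.mem_insert, Finset.mem_singleton] at hx
      rw [Set.mem_toFinset]
      rcases hx with h | h | h | h | h <;> subst h <;> assumption
    have hcard5 : ({a, b, c, d, e} : Finset (Fin n → ℝ)).card = 5 := by
      rw [Finset.card_insert_of_notMem (by simp [hab, hac, had, hae]),
        Finset.card_insert_of_notMem (by simp [hbc, hbd, hbe]),
        Finset.card_insert_of_notMem (by simp [hcd, hce]),
        Finset.card_insert_of_notMem (by simp [hde]), Finset.card_singleton]
    have hle := Finset.card_le_card hsub
    rw [hcard5, hXtf] at hle
    omega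
  -- no class contains four distinct vertices
  have h4 : ∀ u1 ∈ (V : Set (Fin n → ℝ)), ∀ u2 ∈ (V : Set (Fin n → ℝ)),
      ∀ u3 ∈ (V : Set (Fin n → ℝ)), ∀ u4 ∈ (V : Set (Fin n → ℝ)),
      u1 ≠ u2 → u1 ≠ u3 → u1 ≠ u4 → u2 ≠ u3 → u2 ≠ u4 → u3 ≠ u4 →
      cl u1 = cl u2 → cl u1 = cl u3 → cl u1 = cl u4 → False := by
    intro u1 m1 u2 m2 u3 m3 u4 m4 h12 h13 h14 h23 h24 h34 c12 c13 c14
    obtain ⟨z12, hz12X, hz12⟩ := key u1 u2 (hVS m1) (hVP m1) (hVS m2) (hVP m2) h12 c12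
    obtain ⟨z13, hz13X, hz13⟩ := key u1 u3 (hVS m1) (hVP m1) (hVS m3) (hVP m3) h13 c13
    obtain ⟨z14, hz14X, hz14⟩ := key u1 u4 (hVS m1) (hVP m1) (hVS m4) (hVP m4) h14 c14
    obtain ⟨z23, hz23X, hz23⟩ := key u2 u3 (hVS m2) (hVP m2) (hVS m3) (hVP m3) h23
      (c12.symm.trans c13)
    obtain ⟨z24, hz24X, hz24⟩ := key u2 u4 (hVS m2) (hVP m2) (hVS m4) (hVP m4) h24
      (c12.symm.trans c14)
    obtain ⟨z34, hz34X, hz34⟩ := key u3 u4 (hVS m3) (hVP m3) (hVS m4) (hVP m4) h34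
      (c13.symm.trans c14)
    -- midpoints of pairs sharing an index are distinct
    have zne : ∀ z z' p q r : Fin n → ℝ, z + z = p + q → z' + z' = p + r → q ≠ r →
        z ≠ z' := by
      intro z z' p q r h h' hqr he
      rw [he] at h
      exact hqr (add_left_cancel (h.symm.trans h'))
    have d12_13 : z12 ≠ z13 := zne _ _ u1 u2 u3 (by linear_combination hz12)
      (by linear_combination hz13) h23
    have d12_14 : z12 ≠ z14 := zne _ _ u1 u2 u4 (by linear_combination hz12)
      (by linear_combination hz14) h24
    have d12_23 : z12 ≠ z23 := zne _ _ u2 u1 u3 (by linear_combination hz12)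
      (by linear_combination hz23) h13
    have d12_24 : z12 ≠ z24 := zne _ _ u2 u1 u4 (by linear_combination hz12)
      (by linear_combination hz24) h14
    have d13_14 : z13 ≠ z14 := zne _ _ u1 u3 u4 (by linear_combination hz13)
      (by linear_combination hz14) h34
    have d13_23 : z13 ≠ z23 := zne _ _ u3 u1 u2 (by linear_combination hz13)
      (by linear_combination hz23) h12
    have d13_34 : z13 ≠ z34 := zne _ _ u3 u1 u4 (by linear_combination hz13)
      (by linear_combination hz34) h14
    have d14_24 : z14 ≠ z24 := zne _ _ u4 u1 u2 (by linear_combination hz14)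
      (by linear_combination hz24) h12
    have d14_34 : z14 ≠ z34 := zne _ _ u4 u1 u3 (by linear_combination hz14)
      (by linear_combination hz34) h13
    have d23_24 : z23 ≠ z24 := zne _ _ u2 u3 u4 (by linear_combination hz23)
      (by linear_combination hz24) h34
    have d23_34 : z23 ≠ z34 := zne _ _ u3 u2 u4 (by linear_combination hz23)
      (by linear_combination hz34) h24
    have d24_34 : z24 ≠ z34 := zne _ _ u4 u2 u3 (by linear_combination hz24)
      (by linear_combination hz34) h23
    by_cases hA : z13 = z24
    · have eA : u1 + u3 = u2 + u4 := by
        rw [hA] at hz13; exact hz13.symm.trans hz24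
      have hB : z12 ≠ z34 := by
        intro h; rw [h] at hz12
        have eB : u1 + u2 = u3 + u4 := hz12.symm.trans hz34
        exact h14 (half u1 u4 (by linear_combination eA + eB))
      have hC : z14 ≠ z23 := by
        intro h; rw [h] at hz14
        have eD : u1 + u4 = u2 + u3 := hz14.symm.trans hz23
        exact h12 (half u1 u2 (by linear_combination eA + eD))
      exact h5 z12 hz12X z34 hz34X z14 hz14X z23 hz23X z13 hz13X
        hB d12_14 d12_23 d12_13 d14_34.symm d23_34.symm d13_34.symm hC d13_14.symm
        d13_23.symm
    · by_cases hD : z14 = z23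
      · have eD : u1 + u4 = u2 + u3 := by
          rw [hD] at hz14; exact hz14.symm.trans hz23
        have hB2 : z12 ≠ z34 := by
          intro h; rw [h] at hz12
          have eB : u1 + u2 = u3 + u4 := hz12.symm.trans hz34
          exact h13 (half u1 u3 (by linear_combination eB + eD))
        exact h5 z12 hz12X z34 hz34X z13 hz13X z24 hz24X z14 hz14X
          hB2 d12_13 d12_24 d12_14 d13_34.symm d24_34.symm d14_34.symm hA d13_14
          d14_24.symm
      · exact h5 z13 hz13X z24 hz24X z14 hz14X z23 hz23X z12 hz12X
          hA d13_14 d13_23 d12_13.symm d14_24.symm d23_24.symm d12_24.symm hD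
          d12_14.symm d12_23.symm
  -- the counting
  set sc : (Fin n → ZMod 2) → ℕ := fun c => (V.filter (fun v => cl v = c)).card with hscdef
  have hVsum : V.card = ∑ c : Fin n → ZMod 2, sc c :=
    Finset.card_eq_sum_card_fiberwise (fun x _ => Finset.mem_univ (cl x))
  set CX : Finset (Fin n → ZMod 2) := X.toFinset.image cl with hCXdef
  have hCXcard : CX.card = 4 := by
    rw [hCXdef, Finset.card_image_of_injOn (by rw [Set.coe_toFinset]; exact clX), hXtf]
  set C3 : Finset (Fin n → ZMod 2) := Finset.univ.filter (fun c => 3 ≤ sc c) with hC3def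
  -- classes of points of X contain at most one vertex
  have hCX1 : ∀ c ∈ CX, sc c ≤ 1 := by
    intro c hc
    rw [hCXdef, Finset.mem_image] at hc
    obtain ⟨x, hxX, hxc⟩ := hc
    rw [Set.mem_toFinset] at hxX
    apply Finset.card_le_one.2
    intro p hp q hq
    rw [Finset.mem_filter] at hp hq
    exact hVx x hxX p hp.1 q hq.1 (hp.2.trans hxc.symm) (hq.2.trans hxc.symm)
  -- every class has at most 3 vertices
  have hle3 : ∀ c, sc c ≤ 3 := by
    intro c
    by_contra hgt
    push_neg at hgt
    have hrfl : (V.filter (fun v => cl v = c)).card = sc c := rfl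
    obtain ⟨a, hat⟩ := Finset.card_pos.1 (by omega : 0 < (V.filter (fun v => cl v = c)).card)
    have h2lt : 2 < ((V.filter (fun v => cl v = c)).erase a).card := by
      rw [Finset.card_erase_of_mem hat]; omega
    obtain ⟨b, c', d, hbt, hct, hdt, hbc', hbd', hcd'⟩ := Finset.two_lt_card_iff.1 h2lt
    have hba := (Finset.mem_erase.1 hbt).1
    have hca := (Finset.mem_erase.1 hct).1
    have hda := (Finset.mem_erase.1 hdt).1
    have hbt' := (Finset.mem_erase.1 hbt).2
    have hct' := (Finset.mem_erase.1 hct).2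
    have hdt' := (Finset.mem_erase.1 hdt).2
    rw [Finset.mem_filter] at hat hbt' hct' hdt'
    exact h4 a hat.1 b hbt'.1 c' hct'.1 d hdt'.1
      (fun h => hba h.symm) (fun h => hca h.symm) (fun h => hda h.symm) hbc' hbd' hcd'
      (hat.2.trans hbt'.2.symm) (hat.2.trans hct'.2.symm) (hat.2.trans hdt'.2.symm)
  -- each class with three vertices determines a "missing" point of X
  have hQ : ∀ c ∈ C3, ∃ x, x ∈ X.toFinset ∧ ∃ u v w z1 z2 z3 : Fin n → ℝ,
      u ∈ V ∧ cl u = c ∧ v ∈ V ∧ cl v = c ∧ w ∈ V ∧ cl w = c ∧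
      z1 ∈ X ∧ z2 ∈ X ∧ z3 ∈ X ∧ z1 ≠ z2 ∧ z1 ≠ z3 ∧ z2 ≠ z3 ∧
      x ≠ z1 ∧ x ≠ z2 ∧ x ≠ z3 ∧
      u + u + z1 + z1 + z1 + z1 = z1 + z2 + z3 + (z1 + z2 + z3) ∧
      v + v + z2 + z2 + z2 + z2 = z1 + z2 + z3 + (z1 + z2 + z3) ∧
      w + w + z3 + z3 + z3 + z3 = z1 + z2 + z3 + (z1 + z2 + z3) := by
    intro c hc
    rw [hC3def, Finset.mem_filter] at hc
    have hrfl : (V.filter (fun v => cl v = c)).card = sc c := rfl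
    obtain ⟨u, v, w, hu, hv, hw, huv, huw, hvw⟩ :=
      Finset.two_lt_card_iff.1 (by omega : 2 < (V.filter (fun v => cl v = c)).card)
    rw [Finset.mem_filter] at hu hv hw
    obtain ⟨z1, hz1X, hz1⟩ := key v w (hVS hv.1) (hVP hv.1) (hVS hw.1) (hVP hw.1) hvw
      (hv.2.trans hw.2.symm)
    obtain ⟨z2, hz2X, hz2⟩ := key u w (hVS hu.1) (hVP hu.1) (hVS hw.1) (hVP hw.1) huw
      (hu.2.trans hw.2.symm)
    obtain ⟨z3, hz3X, hz3⟩ := key u v (hVS hu.1) (hVP hu.1) (hVS hv.1) (hVP hv.1) huv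
      (hu.2.trans hv.2.symm)
    have d12 : z1 ≠ z2 := by
      intro h; rw [h] at hz1
      exact huv (add_right_cancel (hz2.symm.trans hz1))
    have d13 : z1 ≠ z3 := by
      intro h; rw [h] at hz1
      have : w + v = u + v := by linear_combination hz1.symm.trans hz3
      exact huw (add_right_cancel this).symm
    have d23 : z2 ≠ z3 := by
      intro h; rw [h] at hz2
      exact hvw (add_left_cancel (hz3.symm.trans hz2))
    have hex : ∃ x, x ∈ X.toFinset ∧ x ≠ z1 ∧ x ≠ z2 ∧ x ≠ z3 := by
      by_contra hcon
      push_neg at hcon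
      have hsub : X.toFinset ⊆ {z1, z2, z3} := by
        intro x hx
        simp only [Finset.mem_insert, Finset.mem_singleton]
        by_cases e1 : x = z1
        · exact Or.inl e1
        by_cases e2 : x = z2
        · exact Or.inr (Or.inl e2)
        exact Or.inr (Or.inr (hcon x hx e1 e2))
      have hle := Finset.card_le_card hsub
      have t1 := Finset.card_insert_le z1 ({z2, z3} : Finset (Fin n → ℝ))
      have t2 := Finset.card_insert_le z2 ({z3} : Finset (Fin n → ℝ))
      have t3 : ({z3} : Finset (Fin n → ℝ)).card = 1 := Finset.card_singleton z3
      rw [hXtf] at hle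
      omega
    obtain ⟨x, hxX, hx1, hx2, hx3⟩ := hex
    exact ⟨x, hxX, u, v, w, z1, z2, z3, hu.1, hu.2, hv.1, hv.2, hw.1, hw.2,
      hz1X, hz2X, hz3X, d12, d13, d23, hx1, hx2, hx3,
      by linear_combination hz1 - hz2 - hz3,
      by linear_combination hz2 - hz1 - hz3,
      by linear_combination hz3 - hz1 - hz2⟩
  -- hence there are at most four classes with three vertices
  have hC3card : C3.card ≤ 4 := by
    choose! F hF using hQ
    rw [← hXtf]
    apply Finset.card_le_card_of_injOn F (fun c hc => (hF c hc).1)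
    intro c hcS c' hcS' heq
    have hc : c ∈ C3 := Finset.mem_coe.1 hcS
    have hc' : c' ∈ C3 := Finset.mem_coe.1 hcS'
    by_contra hne
    obtain ⟨u, v, w, z1, z2, z3, huV, huc, hvV, hvc, hwV, hwc, hz1X, hz2X, hz3X,
      d12, d13, d23, hx1, hx2, hx3, ru, rv, rw_⟩ := (hF c hc).2
    obtain ⟨u', v', w', z1', z2', z3', huV', huc', hvV', hvc', hwV', hwc', hz1X', hz2X',
      hz3X', d12', d13', d23', hx1', hx2', hx3', ru', rv', rw'⟩ := (hF c' hc').2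
    have hMgen : ∀ (y1 y2 y3 : Fin n → ℝ), y1 ∈ X → y2 ∈ X → y3 ∈ X →
        y1 ≠ y2 → y1 ≠ y3 → y2 ≠ y3 → F c ≠ y1 → F c ≠ y2 → F c ≠ y3 →
        ({y1, y2, y3} : Finset (Fin n → ℝ)) = X.toFinset.erase (F c) := by
      intro y1 y2 y3 hy1 hy2 hy3 e12 e13 e23 f1 f2 f3
      apply Finset.eq_of_subset_of_card_le
      · intro y hy
        simp only [Finset.mem_insert, Finset.mem_singleton] at hy
        rw [Finset.mem_erase, Set.mem_toFinset]
        rcases hy with h | h | h <;> subst h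
        · exact ⟨fun h => f1 h.symm, hy1⟩
        · exact ⟨fun h => f2 h.symm, hy2⟩
        · exact ⟨fun h => f3 h.symm, hy3⟩
      · rw [Finset.card_erase_of_mem (hF c hc).1, hXtf,
          Finset.card_insert_of_notMem (by simp [e12, e13]),
          Finset.card_insert_of_notMem (by simp [e23]), Finset.card_singleton]
    have hM := hMgen z1 z2 z3 hz1X hz2X hz3X d12 d13 d23 hx1 hx2 hx3
    have hM' : ({z1', z2', z3'} : Finset (Fin n → ℝ)) = X.toFinset.erase (F c) := by
      rw [heq]
      apply Finset.eq_of_subset_of_card_le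
      · intro y hy
        simp only [Finset.mem_insert, Finset.mem_singleton] at hy
        rw [Finset.mem_erase, Set.mem_toFinset]
        rcases hy with h | h | h <;> subst h
        · exact ⟨fun h => hx1' h.symm, hz1X'⟩
        · exact ⟨fun h => hx2' h.symm, hz2X'⟩
        · exact ⟨fun h => hx3' h.symm, hz3X'⟩
      · rw [Finset.card_erase_of_mem (hF c' hc').1, hXtf,
          Finset.card_insert_of_notMem (by simp [d12', d13']),
          Finset.card_insert_of_notMem (by simp [d23']), Finset.card_singleton]
    have hMM : ({z1, z2, z3} : Finset (Fin n → ℝ)) = {z1', z2', z3'} := by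
      rw [hM, ← hM']
    have e1 : ∑ y ∈ ({z1, z2, z3} : Finset (Fin n → ℝ)), y = z1 + z2 + z3 := by
      rw [Finset.sum_insert (by simp [d12, d13]), Finset.sum_insert (by simp [d23]),
        Finset.sum_singleton, add_assoc]
    have e1' : ∑ y ∈ ({z1', z2', z3'} : Finset (Fin n → ℝ)), y = z1' + z2' + z3' := by
      rw [Finset.sum_insert (by simp [d12', d13']), Finset.sum_insert (by simp [d23']),
        Finset.sum_singleton, add_assoc]
    have hsum3 : z1 + z2 + z3 = z1' + z2' + z3' := by
      rw [← e1, hMM, e1']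
    have hz1'mem : z1' ∈ ({z1, z2, z3} : Finset (Fin n → ℝ)) := by
      rw [hMM]; exact Finset.mem_insert_self _ _
    simp only [Finset.mem_insert, Finset.mem_singleton] at hz1'mem
    have hfinal : ∀ t : Fin n → ℝ, t ∈ V → cl t = c → u' = t → False := by
      intro t htV htc hut
      exact hne ((huc'.symm.trans (congrArg cl hut)).trans htc).symm
    rcases hz1'mem with h | h | h
    · exact hfinal u huV huc (half u' u (by linear_combination ru' - ru - 4 * h - 2 * hsum3))
    · exact hfinal v hvV hvc (half u' v (by linear_combination ru' - rv - 4 * h - 2 * hsum3))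
    · exact hfinal w hwV hwc (half u' w (by linear_combination ru' - rw_ - 4 * h - 2 * hsum3))
  -- put everything together
  have pointwise : ∀ c : Fin n → ZMod 2,
      sc c + (if c ∈ CX then 1 else 0) ≤ 2 + (if c ∈ C3 then 1 else 0) := by
    intro c
    by_cases h1 : c ∈ CX <;> by_cases h2 : c ∈ C3
    · have ha := hCX1 c h1
      have hb : 3 ≤ sc c := (Finset.mem_filter.1 h2).2
      omega
    · have ha := hCX1 c h1
      rw [if_pos h1, if_neg h2]
      omega
    · have ha := hle3 c
      rw [if_neg h1, if_pos h2]
      omega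
    · have ha : ¬ 3 ≤ sc c := fun hcon => h2 (Finset.mem_filter.2 ⟨Finset.mem_univ c, hcon⟩)
      rw [if_neg h1, if_neg h2]
      omega
  have hsumle : ∑ c : Fin n → ZMod 2, (sc c + (if c ∈ CX then 1 else 0)) ≤
      ∑ c : Fin n → ZMod 2, (2 + (if c ∈ C3 then 1 else 0)) :=
    Finset.sum_le_sum (fun c _ => pointwise c)
  rw [Finset.sum_add_distrib, Finset.sum_add_distrib] at hsumle
  have eCX : ∑ c : Fin n → ZMod 2, (if c ∈ CX then 1 else 0) = CX.card := by
    rw [Finset.sum_ite_mem, Finset.univ_inter, Finset.sum_const, smul_eq_mul, mul_one]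
  have eC3 : ∑ c : Fin n → ZMod 2, (if c ∈ C3 then 1 else 0) = C3.card := by
    rw [Finset.sum_ite_mem, Finset.univ_inter, Finset.sum_const, smul_eq_mul, mul_one]
  have e2 : ∑ _c : Fin n → ZMod 2, (2:ℕ) = 2 ^ n * 2 := by
    rw [Finset.sum_const, Finset.card_univ, smul_eq_mul]
    congr 1
    simp
  rw [eCX, eC3, e2, ← hVsum, hCXcard] at hsumle
  have hp : 2 ^ (n + 1) = 2 ^ n * 2 := pow_succ 2 n
  omega
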